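/- Let S1, S2 be Polish spaces, ν a probability measure on S2, and S ⊆ P_ν(S1×S2) nonempty and convex. Then every solution is a strong solution (every μ ∈ S has the form μ(dx×dy)=δ_{F(y)}(dx)ν(dy) for some Borel F) if and only if pointwise uniqueness holds for S. -/

import Mathlib

open MeasureTheory ProbabilityTheory
open scoped ENNReal

/-- A zero-one valued probability measure on `ℝ` has an atom of measure one. -/
private lemma real_zero_one_atom (m : Measure ℝ) [IsProbabilityMeasure m]
    (h01 : ∀ s : Set ℝ, MeasurableSet s → m s = 0 ∨ m s = 1) :
    ∃ t : ℝ, m {t} = 1 := by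
  set T : Set ℝ := {t | m (Set.Iic t) = 1} with hT
  have hTne : T.Nonempty := by
    by_contra hc
    rw [Set.not_nonempty_iff_eq_empty] at hc
    have hall : ∀ n : ℕ, m (Set.Iic (n : ℝ)) = 0 := by
      intro n
      rcases h01 _ measurableSet_Iic with h | h
      · exact h
      · exfalso
        have hmem : (n : ℝ) ∈ T := h
        rw [hc] at hmem
        exact hmem
    have huniv : (Set.univ : Set ℝ) = ⋃ n : ℕ, Set.Iic (n : ℝ) := by
      ext x
      simpa using exists_nat_ge x
    have : m Set.univ = 0 := by
      rw [huniv]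
      refine le_antisymm ((measure_iUnion_le _).trans_eq ?_) (zero_le)
      simp only [hall, tsum_zero]
    simp [measure_univ] at this
  have hTbdd : BddBelow T := by
    by_contra hc
    rw [not_bddBelow_iff] at hc
    have hall : ∀ n : ℕ, m (Set.Iic (-(n : ℝ))) = 1 := by
      intro n
      obtain ⟨t, htT, htlt⟩ := hc (-(n : ℝ))
      have hle : (1 : ℝ≥0∞) ≤ m (Set.Iic (-(n : ℝ))) := by
        calc (1 : ℝ≥0∞) = m (Set.Iic t) := htT.symm
        _ ≤ m (Set.Iic (-(n : ℝ))) := measure_mono (Set.Iic_subset_Iic.2 htlt.le)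
      exact le_antisymm prob_le_one hle
    have hint : m (⋂ n : ℕ, Set.Iic (-(n : ℝ))) = 1 := by
      rw [Antitone.measure_iInter ?_ (fun i => measurableSet_Iic.nullMeasurableSet)
        ⟨0, measure_ne_top _ _⟩]
      · exact (iInf_congr hall).trans iInf_const
      · intro a b hab
        refine Set.Iic_subset_Iic.2 ?_
        have : (a : ℝ) ≤ b := Nat.cast_le.2 hab
        linarith
    have hempty : (⋂ n : ℕ, Set.Iic (-(n : ℝ))) = ∅ := by
      ext x
      simp only [Set.mem_iInter, Set.mem_Iic, Set.mem_empty_iff_false, iff_false, not_forall,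
        not_le]
      obtain ⟨n, hn⟩ := exists_nat_gt (-x)
      exact ⟨n, by linarith⟩
    rw [hempty] at hint
    simp at hint
  set t₀ := sInf T with ht₀
  have hIic : m (Set.Iic t₀) = 1 := by
    have heq : Set.Iic t₀ = ⋂ n : ℕ, Set.Iic (t₀ + 1 / (n + 1)) := by
      ext x
      simp only [Set.mem_Iic, Set.mem_iInter]
      constructor
      · intro hx n
        have : (0 : ℝ) < 1 / (n + 1) := by positivity
        linarith
      · intro hx
        by_contra hcon
        push_neg at hcon
        obtain ⟨n, hn⟩ := exists_nat_one_div_lt (by linarith : (0 : ℝ) < x - t₀)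
        have := hx n
        linarith
    have heach : ∀ n : ℕ, m (Set.Iic (t₀ + 1 / (n + 1))) = 1 := by
      intro n
      have hpos : (0 : ℝ) < 1 / (n + 1) := by positivity
      obtain ⟨t, htT, hlt⟩ := exists_lt_of_csInf_lt hTne (by linarith : sInf T < t₀ + 1 / (n + 1))
      have hle : (1 : ℝ≥0∞) ≤ m (Set.Iic (t₀ + 1 / (n + 1))) := by
        calc (1 : ℝ≥0∞) = m (Set.Iic t) := htT.symm
        _ ≤ _ := measure_mono (Set.Iic_subset_Iic.2 hlt.le)
      exact le_antisymm prob_le_one hle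
    rw [heq, Antitone.measure_iInter ?_ (fun i => measurableSet_Iic.nullMeasurableSet)
      ⟨0, measure_ne_top _ _⟩]
    · exact (iInf_congr heach).trans iInf_const
    · intro a b hab
      refine Set.Iic_subset_Iic.2 ?_
      have hcast : (a : ℝ) ≤ b := Nat.cast_le.2 hab
      have : (1 : ℝ) / (b + 1) ≤ 1 / (a + 1) := by
        apply one_div_le_one_div_of_le
        · positivity
        · linarith
      linarith
  have hIio : m (Set.Iio t₀) = 0 := by
    have heq : Set.Iio t₀ = ⋃ n : ℕ, Set.Iic (t₀ - 1 / (n + 1)) := by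
      ext x
      simp only [Set.mem_Iio, Set.mem_iUnion, Set.mem_Iic]
      constructor
      · intro hx
        obtain ⟨n, hn⟩ := exists_nat_one_div_lt (by linarith : (0 : ℝ) < t₀ - x)
        exact ⟨n, by linarith⟩
      · rintro ⟨n, hn⟩
        have : (0 : ℝ) < 1 / (n + 1) := by positivity
        linarith
    have heach : ∀ n : ℕ, m (Set.Iic (t₀ - 1 / (n + 1))) = 0 := by
      intro n
      rcases h01 _ measurableSet_Iic with h | h
      · exact h
      · exfalso
        have hmem : (t₀ - 1 / (n + 1)) ∈ T := h
        have := csInf_le hTbdd hmem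
        have hpos : (0 : ℝ) < 1 / (n + 1) := by positivity
        rw [← ht₀] at this
        linarith
    rw [heq]
    refine le_antisymm ((measure_iUnion_le _).trans_eq ?_) (zero_le)
    simp only [heach, tsum_zero]
  refine ⟨t₀, ?_⟩
  have hunion : Set.Iic t₀ = Set.Iio t₀ ∪ {t₀} := (Set.Iio_union_right).symm
  have hge : (1 : ℝ≥0∞) ≤ m {t₀} := by
    calc (1 : ℝ≥0∞) = m (Set.Iic t₀) := hIic.symm
    _ ≤ m (Set.Iio t₀) + m {t₀} := hunion ▸ measure_union_le _ _
    _ = m {t₀} := by rw [hIio, zero_add]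
  exact le_antisymm prob_le_one hge

/-- A probability measure on a standard Borel space whose self-product is concentrated on
the diagonal is a Dirac measure. -/
private lemma dirac_of_prod_offdiag {α : Type} [MeasurableSpace α] [StandardBorelSpace α]
    (m : Measure α) [IsProbabilityMeasure m]
    (h : (m.prod m) {p : α × α | p.1 ≠ p.2} = 0) : ∃ x, m = Measure.dirac x := by
  have h01 : ∀ s : Set α, MeasurableSet s → m s = 0 ∨ m s = 1 := by
    intro s hs
    have hsub : s ×ˢ sᶜ ⊆ {p : α × α | p.1 ≠ p.2} := by
      rintro ⟨a, b⟩ ⟨ha, hb⟩ hab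
      exact hb (hab ▸ ha)
    have hmul : m s * m sᶜ = 0 := by
      refine le_antisymm ?_ (zero_le)
      rw [← Measure.prod_prod]
      exact (measure_mono hsub).trans_eq h
    rcases mul_eq_zero.1 hmul with h' | h'
    · exact Or.inl h'
    · right
      rw [measure_compl hs (measure_ne_top m s), measure_univ] at h'
      have hle : m s ≤ 1 := prob_le_one
      have := tsub_eq_zero_iff_le.1 h'
      exact le_antisymm hle this
  obtain ⟨e, he⟩ := exists_measurableEmbedding_real α
  haveI : IsProbabilityMeasure (m.map e) := Measure.isProbabilityMeasure_map he.measurable.aemeasurable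
  have h01' : ∀ s : Set ℝ, MeasurableSet s → (m.map e) s = 0 ∨ (m.map e) s = 1 := by
    intro s hs
    rw [Measure.map_apply he.measurable hs]
    exact h01 _ (he.measurable hs)
  obtain ⟨t, ht⟩ := real_zero_one_atom (m.map e) h01'
  rw [Measure.map_apply he.measurable (measurableSet_singleton t)] at ht
  have hne : (e ⁻¹' {t}).Nonempty := by
    by_contra hc
    rw [Set.not_nonempty_iff_eq_empty] at hc
    rw [hc] at ht
    simp at ht
  obtain ⟨x, hx⟩ := hne
  have hpre : e ⁻¹' {t} = {x} := by
    ext z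
    simp only [Set.mem_preimage, Set.mem_singleton_iff]
    constructor
    · intro hz
      exact he.injective (hz.trans hx.symm)
    · rintro rfl
      exact hx
  have hx1 : m {x} = 1 := by rwa [hpre] at ht
  refine ⟨x, ?_⟩
  ext s hs
  rw [Measure.dirac_apply' x hs]
  by_cases hxs : x ∈ s
  · have hge : (1 : ℝ≥0∞) ≤ m s := hx1 ▸ measure_mono (Set.singleton_subset_iff.2 hxs)
    rw [Set.indicator_of_mem hxs]
    exact le_antisymm prob_le_one hge
  · rw [Set.indicator_of_notMem hxs]
    have hsub : s ⊆ {x}ᶜ := fun z hz => fun hzx => hxs (hzx ▸ hz)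
    have hle : m s ≤ m {x}ᶜ := measure_mono hsub
    rw [measure_compl (measurableSet_singleton x) (measure_ne_top _ _), hx1, measure_univ,
      tsub_self] at hle
    exact le_antisymm hle (zero_le)

/-- Corollary 1.7 of Kurtz: if the set of joint solution measures is nonempty and
convex, then every solution is strong iff pointwise uniqueness holds. -/
theorem stmt3
    {S1 S2 : Type} [MeasurableSpace S1] [TopologicalSpace S1] [PolishSpace S1] [BorelSpace S1]
    [MeasurableSpace S2] [TopologicalSpace S2] [PolishSpace S2] [BorelSpace S2]
    (ν : Measure S2) [IsProbabilityMeasure ν]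
    (S : Set (Measure (S1 × S2)))
    (hS : ∀ μ ∈ S, IsProbabilityMeasure μ ∧ μ.map Prod.snd = ν)
    (hne : S.Nonempty)
    (hconv : ∀ μ1 ∈ S, ∀ μ2 ∈ S, ∀ p : ℝ≥0∞, p ≤ 1 → p • μ1 + (1 - p) • μ2 ∈ S) :
    (∀ μ ∈ S, ∃ F : S2 → S1, Measurable F ∧ μ = ν.map (fun y => (F y, y)))
    ↔ (∀ (Ω : Type) (mΩ : MeasurableSpace Ω) (P : Measure Ω), IsProbabilityMeasure P →
        ∀ (X1 X2 : Ω → S1) (Y : Ω → S2), Measurable X1 → Measurable X2 → Measurable Y →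
          P.map (fun ω => (X1 ω, Y ω)) ∈ S → P.map (fun ω => (X2 ω, Y ω)) ∈ S →
          X1 =ᵐ[P] X2) := by
  constructor
  · -- strong ⇒ pointwise uniqueness
    intro h Ω mΩ P hP X1 X2 Y hX1 hX2 hY h1 h2
    haveI := hP
    set μ1 := P.map (fun ω => (X1 ω, Y ω)) with hμ1
    set μ2 := P.map (fun ω => (X2 ω, Y ω)) with hμ2
    have hmem : (2⁻¹ : ℝ≥0∞) • μ1 + ((1 : ℝ≥0∞) - 2⁻¹) • μ2 ∈ S :=
      hconv _ h1 _ h2 _ (ENNReal.inv_le_one.mpr one_le_two)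
    obtain ⟨F, hF, hFeq⟩ := h _ hmem
    have hGm : MeasurableSet {p : S1 × S2 | p.1 = F p.2} :=
      MeasureTheory.StronglyMeasurable.measurableSet_eq_fun measurable_fst.stronglyMeasurable
        ((hF.comp measurable_snd).stronglyMeasurable)
    have hmix0 : ((2⁻¹ : ℝ≥0∞) • μ1 + ((1 : ℝ≥0∞) - 2⁻¹) • μ2) {p : S1 × S2 | p.1 = F p.2}ᶜ = 0 := by
      rw [hFeq, Measure.map_apply (hF.prodMk measurable_id : Measurable fun y => (F y, y)) hGm.compl]
      convert measure_empty
      · ext y; simp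
      · infer_instance
    rw [Measure.add_apply, Measure.smul_apply, Measure.smul_apply, smul_eq_mul,
      smul_eq_mul] at hmix0
    obtain ⟨ha, hb⟩ := add_eq_zero.1 hmix0
    have h10 : μ1 {p : S1 × S2 | p.1 = F p.2}ᶜ = 0 := by
      rcases mul_eq_zero.1 ha with h' | h'
      · exact absurd h' (by simp)
      · exact h'
    have h20 : μ2 {p : S1 × S2 | p.1 = F p.2}ᶜ = 0 := by
      rcases mul_eq_zero.1 hb with h' | h'
      · exfalso
        rw [ENNReal.one_sub_inv_two] at h'
        simp at h'
      · exact h'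
    have e1 : X1 =ᵐ[P] fun ω => F (Y ω) := by
      refine ae_iff.2 ?_
      have hpre : {ω | ¬ X1 ω = F (Y ω)} =
          (fun ω => (X1 ω, Y ω)) ⁻¹' {p : S1 × S2 | p.1 = F p.2}ᶜ := by
        ext ω; simp
      rw [hpre, ← Measure.map_apply (hX1.prodMk hY : Measurable fun ω => (X1 ω, Y ω)) hGm.compl]
      exact h10
    have e2 : X2 =ᵐ[P] fun ω => F (Y ω) := by
      refine ae_iff.2 ?_
      have hpre : {ω | ¬ X2 ω = F (Y ω)} =
          (fun ω => (X2 ω, Y ω)) ⁻¹' {p : S1 × S2 | p.1 = F p.2}ᶜ := by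
        ext ω; simp
      rw [hpre, ← Measure.map_apply (hX2.prodMk hY : Measurable fun ω => (X2 ω, Y ω)) hGm.compl]
      exact h20
    exact e1.trans e2.symm
  · -- pointwise uniqueness ⇒ strong
    intro h μ hμ
    obtain ⟨hprob, hsnd⟩ := hS μ hμ
    haveI := hprob
    have hS1ne : Nonempty S1 := by
      by_contra hc
      have huniv : (Set.univ : Set (S1 × S2)) = ∅ := by
        rw [Set.univ_eq_empty_iff]
        exact ⟨fun p => hc ⟨p.1⟩⟩
      have := measure_univ (μ := μ)
      rw [huniv] at this
      simp at this
    set μ' := μ.map Prod.swap with hμ'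
    haveI : IsProbabilityMeasure μ' := Measure.isProbabilityMeasure_map measurable_swap.aemeasurable
    have hswap : μ'.map Prod.swap = μ := by
      rw [hμ', Measure.map_map measurable_swap measurable_swap]
      have : (Prod.swap ∘ Prod.swap : S1 × S2 → S1 × S2) = id := by
        funext p; simp
      rw [this, Measure.map_id]
    have hfst : μ'.fst = ν := by
      rw [Measure.fst, hμ', Measure.map_map measurable_fst measurable_swap]
      exact hsnd
    set κ := μ'.condKernel with hκ
    have hdis : ν ⊗ₘ κ = μ' := by
      rw [hκ, ← hfst]
      exact μ'.disintegrate μ'.condKernel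
    -- the main slicing identity
    have hμs : ∀ s : Set (S1 × S2), MeasurableSet s →
        μ s = ∫⁻ y, κ y ((fun x => (x, y)) ⁻¹' s) ∂ν := by
      intro s hs
      rw [← hswap, Measure.map_apply measurable_swap hs, ← hdis,
        Measure.compProd_apply (measurable_swap hs)]
      rfl
    set P : Measure (S2 × S1 × S1) := ν ⊗ₘ (κ ×ₖ κ) with hPdef
    haveI : IsProbabilityMeasure P := by
      constructor
      rw [hPdef, Measure.compProd_apply_univ]
      exact measure_univ
    have hm1 : Measurable fun ω : S2 × S1 × S1 => (ω.2.1, ω.1) :=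
      Measurable.prodMk (measurable_snd.fst) measurable_fst
    have hm2 : Measurable fun ω : S2 × S1 × S1 => (ω.2.2, ω.1) :=
      Measurable.prodMk (measurable_snd.snd) measurable_fst
    have hlaw1 : P.map (fun ω : S2 × S1 × S1 => (ω.2.1, ω.1)) = μ := by
      ext s hs
      rw [Measure.map_apply hm1 hs, hPdef, Measure.compProd_apply (hm1 hs), hμs s hs]
      refine lintegral_congr fun y => ?_
      rw [Kernel.prod_apply]
      have hset : (Prod.mk y ⁻¹' ((fun ω : S2 × S1 × S1 => (ω.2.1, ω.1)) ⁻¹' s))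
          = ((fun x => (x, y)) ⁻¹' s) ×ˢ Set.univ := by
        ext p
        simp [Set.mem_prod]
      rw [hset, Measure.prod_prod, measure_univ, mul_one]
    have hlaw2 : P.map (fun ω : S2 × S1 × S1 => (ω.2.2, ω.1)) = μ := by
      ext s hs
      rw [Measure.map_apply hm2 hs, hPdef, Measure.compProd_apply (hm2 hs), hμs s hs]
      refine lintegral_congr fun y => ?_
      rw [Kernel.prod_apply]
      have hset : (Prod.mk y ⁻¹' ((fun ω : S2 × S1 × S1 => (ω.2.2, ω.1)) ⁻¹' s))
          = Set.univ ×ˢ ((fun x => (x, y)) ⁻¹' s) := by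
        ext p
        simp [Set.mem_prod]
      rw [hset, Measure.prod_prod, measure_univ, one_mul]
    have huniq : (fun ω : S2 × S1 × S1 => ω.2.1) =ᵐ[P] (fun ω => ω.2.2) :=
      h (S2 × S1 × S1) inferInstance P inferInstance
        (fun ω => ω.2.1) (fun ω => ω.2.2) (fun ω => ω.1)
        (measurable_snd.fst) (measurable_snd.snd)
        measurable_fst
        (by rw [show P.map (fun ω : S2 × S1 × S1 => (ω.2.1, ω.1)) = μ from hlaw1]; exact hμ)
        (by rw [show P.map (fun ω : S2 × S1 × S1 => (ω.2.2, ω.1)) = μ from hlaw2]; exact hμ)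
    have hDm : MeasurableSet {p : S1 × S1 | p.1 = p.2} :=
      MeasureTheory.StronglyMeasurable.measurableSet_eq_fun measurable_fst.stronglyMeasurable measurable_snd.stronglyMeasurable
    have hae0 : ∀ᵐ y ∂ν, (κ y).prod (κ y) {p : S1 × S1 | p.1 = p.2}ᶜ = 0 := by
      have h0 : P ((fun ω : S2 × S1 × S1 => ω.2) ⁻¹' {p : S1 × S1 | p.1 = p.2}ᶜ) = 0 := by
        rw [measure_eq_zero_iff_ae_notMem]
        filter_upwards [huniq] with ω hω
        exact fun hmem => hmem hω
      rw [hPdef, Measure.compProd_apply (hDm.compl.preimage measurable_snd)] at h0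
      have hint : ∫⁻ y, (κ ×ₖ κ) y {p : S1 × S1 | p.1 = p.2}ᶜ ∂ν = 0 := by
        rw [← h0]
        exact lintegral_congr fun y => rfl
      rw [lintegral_eq_zero_iff (Kernel.measurable_coe _ hDm.compl)] at hint
      filter_upwards [hint] with y hy
      rw [← Kernel.prod_apply]
      exact hy
    have hdir : ∀ᵐ y ∂ν, ∃ x, κ y = Measure.dirac x := by
      filter_upwards [hae0] with y hy
      refine dirac_of_prod_offdiag (κ y) ?_
      have : {p : S1 × S1 | p.1 ≠ p.2} = {p : S1 × S1 | p.1 = p.2}ᶜ := rfl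
      rw [this]
      exact hy
    obtain ⟨e, he⟩ := exists_measurableEmbedding_real S1
    obtain ⟨g, hgm, hge⟩ := he.exists_measurable_extend measurable_id (fun _ => hS1ne)
    set F : S2 → S1 := fun y => g (∫ x, e x ∂(κ y)) with hFdef
    have hFm : Measurable F := by
      refine hgm.comp ?_
      have hsm : StronglyMeasurable (Function.uncurry fun (_ : S2) (x : S1) => e x) :=
        (he.measurable.comp measurable_snd).stronglyMeasurable
      exact (MeasureTheory.StronglyMeasurable.integral_kernel_prod_right
        (κ := κ) hsm).measurable
    have hκdir : ∀ᵐ y ∂ν, κ y = Measure.dirac (F y) := by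
      filter_upwards [hdir] with y hy
      obtain ⟨x, hx⟩ := hy
      have hFy : F y = x := by
        rw [hFdef]
        simp only
        rw [hx, integral_dirac]
        exact congrFun hge x
      rw [hx, hFy]
    refine ⟨F, hFm, ?_⟩
    ext s hs
    rw [Measure.map_apply (hFm.prodMk measurable_id : Measurable fun y => (F y, y)) hs, hμs s hs]
    have hstep1 : ∫⁻ y, κ y ((fun x => (x, y)) ⁻¹' s) ∂ν
        = ∫⁻ y, Measure.dirac (F y) ((fun x => (x, y)) ⁻¹' s) ∂ν := by
      refine lintegral_congr_ae ?_
      filter_upwards [hκdir] with y hy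
      rw [hy]
    rw [hstep1]
    have hstep2 : ∀ y, Measure.dirac (F y) ((fun x => (x, y)) ⁻¹' s)
        = Set.indicator ((fun y => (F y, y)) ⁻¹' s) (1 : S2 → ℝ≥0∞) y := by
      intro y
      rw [Measure.dirac_apply' (F y) (measurable_prodMk_right hs)]
      by_cases hmem : (F y, y) ∈ s
      · rw [Set.indicator_of_mem (by exact hmem), Set.indicator_of_mem (by exact hmem)]
        rfl
      · rw [Set.indicator_of_notMem (by exact hmem), Set.indicator_of_notMem (by exact hmem)]
    rw [lintegral_congr hstep2, lintegral_indicator_one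
      ((hFm.prodMk measurable_id : Measurable fun y => (F y, y)) hs)]
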